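/- Let u_t(x) = E_{p_t(x₁|x)}[u_t(x|x₁)] be the marginal velocity field of a Gaussian probability path with scheduler (α_t, σ_t) and data distribution q, and suppose every scheduler's marginal velocity field and the corresponding flow are well-defined with unique solutions. Then for any two schedulers (α_t, σ_t) and (ᾱ_r, σ̄_r), the flows started from the same noise point x₀ ∼ N(0, I) satisfy x̄(1) = x(1): i.e., the induced coupling between noise x₀ and data endpoint is the same for all schedulers. -/

import Mathlib

open MeasureTheory Real Set

/-- The `d`-dimensional isotropic Gaussian density `N(x | μ, c²I)`. -/
noncomputable def gaussDens (d : ℕ) (μ : EuclideanSpace ℝ (Fin d)) (c : ℝ)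
    (x : EuclideanSpace ℝ (Fin d)) : ℝ :=
  (2 * π * c ^ 2) ^ (-(d : ℝ) / 2) * Real.exp (-‖x - μ‖ ^ 2 / (2 * c ^ 2))

/-- Conditional velocity field `u(x|x₁) = (ḃ/b)x + (ȧ − ḃ a/b)x₁`. -/
noncomputable def condVF (d : ℕ) (a a' b b' : ℝ)
    (x x₁ : EuclideanSpace ℝ (Fin d)) : EuclideanSpace ℝ (Fin d) :=
  (b' / b) • x + (a' - b' * a / b) • x₁

/-- Marginal velocity field `u(x) = E_{p(x₁|x)}[u(x|x₁)]` of a Gaussian path. -/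
noncomputable def margVF (d : ℕ) (q : EuclideanSpace ℝ (Fin d) → ℝ)
    (a a' b b' : ℝ) (x : EuclideanSpace ℝ (Fin d)) : EuclideanSpace ℝ (Fin d) :=
  (∫ x₁, gaussDens d (a • x₁) b x * q x₁)⁻¹ •
    ∫ x₁, (gaussDens d (a • x₁) b x * q x₁) • condVF d a a' b b' x x₁

lemma gaussDens_pos {d : ℕ} {c : ℝ} (hc : c ≠ 0) (μ x : EuclideanSpace ℝ (Fin d)) :
    0 < gaussDens d μ c x := by
  apply mul_pos
  · apply Real.rpow_pos_of_pos
    positivity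
  · exact Real.exp_pos _

lemma gaussDens_nonneg {d : ℕ} (μ : EuclideanSpace ℝ (Fin d)) (c : ℝ)
    (x : EuclideanSpace ℝ (Fin d)) : 0 ≤ gaussDens d μ c x := by
  apply mul_nonneg
  · apply Real.rpow_nonneg; positivity
  · exact (Real.exp_pos _).le

lemma gaussDens_le {d : ℕ} (μ : EuclideanSpace ℝ (Fin d)) (c : ℝ)
    (x : EuclideanSpace ℝ (Fin d)) :
    gaussDens d μ c x ≤ (2 * π * c ^ 2) ^ (-(d : ℝ) / 2) := by
  have h1 : Real.exp (-‖x - μ‖ ^ 2 / (2 * c ^ 2)) ≤ 1 := by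
    apply Real.exp_le_one_iff.mpr
    rcases eq_or_ne c 0 with h | h
    · simp [h]
    · exact div_nonpos_of_nonpos_of_nonneg (neg_nonpos.mpr (by positivity)) (by positivity)
  calc gaussDens d μ c x ≤ (2 * π * c ^ 2) ^ (-(d : ℝ) / 2) * 1 := by
        apply mul_le_mul_of_nonneg_left h1
        apply Real.rpow_nonneg; positivity
    _ = _ := mul_one _

lemma gaussDens_continuous {d : ℕ} (c : ℝ) :
    Continuous fun p : EuclideanSpace ℝ (Fin d) × EuclideanSpace ℝ (Fin d) =>
      gaussDens d p.1 c p.2 := by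
  unfold gaussDens
  fun_prop

lemma mul_exp_le {b m : ℝ} (hb : b ≠ 0) (hm : 0 ≤ m) :
    m * Real.exp (-m ^ 2 / (2 * b ^ 2)) ≤ 1 + 2 * b ^ 2 := by
  have hb2 : (0:ℝ) < 2 * b ^ 2 := by positivity
  rcases le_or_gt m 1 with h | h
  · have he : Real.exp (-m ^ 2 / (2 * b ^ 2)) ≤ 1 :=
      Real.exp_le_one_iff.mpr
        (div_nonpos_of_nonpos_of_nonneg (neg_nonpos.mpr (by positivity)) (by positivity))
    nlinarith [Real.exp_pos (-m ^ 2 / (2 * b ^ 2))]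
  · have h1 : m ^ 2 / (2 * b ^ 2) ≤ Real.exp (m ^ 2 / (2 * b ^ 2)) :=
      (Real.add_one_le_exp _).trans' (by linarith [sq_nonneg m, div_nonneg (sq_nonneg m) hb2.le])
    have h2 : Real.exp (-m ^ 2 / (2 * b ^ 2)) = (Real.exp (m ^ 2 / (2 * b ^ 2)))⁻¹ := by
      rw [← Real.exp_neg]; ring_nf
    have hm2 : (0:ℝ) < m ^ 2 / (2 * b ^ 2) := by positivity
    have h3 : (Real.exp (m ^ 2 / (2 * b ^ 2)))⁻¹ ≤ (m ^ 2 / (2 * b ^ 2))⁻¹ :=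
      inv_anti₀ hm2 h1
    calc m * Real.exp (-m ^ 2 / (2 * b ^ 2)) ≤ m * (m ^ 2 / (2 * b ^ 2))⁻¹ := by
          rw [h2]; exact mul_le_mul_of_nonneg_left h3 hm
      _ = 2 * b ^ 2 / m := by field_simp
      _ ≤ 2 * b ^ 2 := by
          rw [div_le_iff₀ (by linarith)]
          nlinarith
      _ ≤ 1 + 2 * b ^ 2 := by linarith

lemma gaussDens_scale (d : ℕ) {s : ℝ} (b : ℝ) (hs : 0 < s) (μ x : EuclideanSpace ℝ (Fin d)) :
    gaussDens d (s • μ) (s * b) (s • x) = s ^ (-(d:ℝ)) * gaussDens d μ b x := by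
  unfold gaussDens
  have h1 : ‖s • x - s • μ‖ ^ 2 = s ^ 2 * ‖x - μ‖ ^ 2 := by
    rw [← smul_sub, norm_smul, Real.norm_eq_abs, mul_pow, sq_abs]
  have h2 : (2 : ℝ) * π * (s * b) ^ 2 = s ^ 2 * (2 * π * b ^ 2) := by ring
  have h3 : ((s:ℝ) ^ 2) ^ (-(d : ℝ) / 2) = s ^ (-(d:ℝ)) := by
    rw [← Real.rpow_natCast s 2, ← Real.rpow_mul hs.le]
    congr 1; ring
  have hexp : -(s ^ 2 * ‖x - μ‖ ^ 2) / (2 * (s * b) ^ 2) = -‖x - μ‖ ^ 2 / (2 * b ^ 2) := by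
    rcases eq_or_ne b 0 with hb | hb
    · simp [hb]
    · field_simp
  rw [h1, h2, Real.mul_rpow (by positivity) (by positivity), h3, hexp]
  ring

variable {d : ℕ} {q : EuclideanSpace ℝ (Fin d) → ℝ}

/-- gauss * ‖x₁‖ is bounded. -/
lemma gauss_mul_norm_le {a b : ℝ} (ha : 0 < a) (hb : b ≠ 0)
    (x x₁ : EuclideanSpace ℝ (Fin d)) :
    gaussDens d (a • x₁) b x * ‖x₁‖ ≤
      (2 * π * b ^ 2) ^ (-(d : ℝ) / 2) * ((1 + 2 * b ^ 2 + ‖x‖) / a) := by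
  set m := ‖x - a • x₁‖ with hm
  have hm0 : 0 ≤ m := norm_nonneg _
  have hn : ‖x₁‖ ≤ (m + ‖x‖) / a := by
    rw [le_div_iff₀ ha]
    have : a * ‖x₁‖ = ‖a • x₁‖ := by
      rw [norm_smul, Real.norm_eq_abs, abs_of_pos ha]
    rw [mul_comm, ← this] at *
    calc a * ‖x₁‖ = ‖a • x₁‖ := by rw [norm_smul, Real.norm_eq_abs, abs_of_pos ha]
      _ ≤ ‖a • x₁ - x‖ + ‖x‖ := by
          have := norm_sub_norm_le (a • x₁) x
          linarith [abs_le.mp (abs_norm_sub_norm_le (a • x₁) x)]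
      _ = m + ‖x‖ := by rw [hm, norm_sub_rev]
  have key : Real.exp (-m ^ 2 / (2 * b ^ 2)) * ‖x₁‖ ≤ (1 + 2 * b ^ 2 + ‖x‖) / a := by
    have he1 : Real.exp (-m ^ 2 / (2 * b ^ 2)) ≤ 1 :=
      Real.exp_le_one_iff.mpr
        (div_nonpos_of_nonpos_of_nonneg (neg_nonpos.mpr (by positivity)) (by positivity))
    calc Real.exp (-m ^ 2 / (2 * b ^ 2)) * ‖x₁‖
        ≤ Real.exp (-m ^ 2 / (2 * b ^ 2)) * ((m + ‖x‖) / a) :=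
          mul_le_mul_of_nonneg_left hn (Real.exp_pos _).le
      _ = (m * Real.exp (-m ^ 2 / (2 * b ^ 2)) + ‖x‖ * Real.exp (-m ^ 2 / (2 * b ^ 2))) / a := by
          ring
      _ ≤ ((1 + 2 * b ^ 2) + ‖x‖ * 1) / a := by
          have h1 := mul_exp_le hb hm0
          have h2 : ‖x‖ * Real.exp (-m ^ 2 / (2 * b ^ 2)) ≤ ‖x‖ * 1 :=
            mul_le_mul_of_nonneg_left he1 (norm_nonneg x)
          exact (div_le_div_iff_of_pos_right ha).mpr (by linarith)

      _ = (1 + 2 * b ^ 2 + ‖x‖) / a := by ring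
  unfold gaussDens
  calc (2 * π * b ^ 2) ^ (-(d : ℝ) / 2) * Real.exp (-m ^ 2 / (2 * b ^ 2)) * ‖x₁‖
      = (2 * π * b ^ 2) ^ (-(d : ℝ) / 2) * (Real.exp (-m ^ 2 / (2 * b ^ 2)) * ‖x₁‖) := by ring
    _ ≤ _ := mul_le_mul_of_nonneg_left key (by positivity)

/-- Posterior mean of the Gaussian path. -/
noncomputable def pmean (d : ℕ) (q : EuclideanSpace ℝ (Fin d) → ℝ) (a b : ℝ)
    (x : EuclideanSpace ℝ (Fin d)) : EuclideanSpace ℝ (Fin d) :=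
  (∫ x₁, gaussDens d (a • x₁) b x * q x₁)⁻¹ •
    ∫ x₁, (gaussDens d (a • x₁) b x * q x₁) • x₁

lemma gauss_cont_x₁ (a b : ℝ) (x : EuclideanSpace ℝ (Fin d)) :
    Continuous fun x₁ : EuclideanSpace ℝ (Fin d) => gaussDens d (a • x₁) b x := by
  unfold gaussDens
  fun_prop

lemma integrable_weight (hqint : Integrable q) (a b : ℝ) (x : EuclideanSpace ℝ (Fin d)) :
    Integrable (fun x₁ => gaussDens d (a • x₁) b x * q x₁) := by
  apply hqint.bdd_mul (c := (2 * π * b ^ 2) ^ (-(d : ℝ) / 2)) ((gauss_cont_x₁ a b x).aestronglyMeasurable)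
  refine Filter.Eventually.of_forall fun x₁ => ?_
  rw [Real.norm_eq_abs, abs_of_nonneg (gaussDens_nonneg _ _ _)]
  exact gaussDens_le _ _ _

lemma integrable_weight_smul (hq0 : ∀ y, 0 ≤ q y) (hqint : Integrable q)
    {a b : ℝ} (ha : 0 < a) (hb : b ≠ 0) (x : EuclideanSpace ℝ (Fin d)) :
    Integrable (fun x₁ => (gaussDens d (a • x₁) b x * q x₁) • x₁) := by
  set C := (2 * π * b ^ 2) ^ (-(d : ℝ) / 2) * ((1 + 2 * b ^ 2 + ‖x‖) / a) with hC
  have hCpos : 0 ≤ C := by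
    rw [hC]
    have : (0:ℝ) ≤ 1 + 2 * b ^ 2 + ‖x‖ := by positivity
    positivity
  apply Integrable.mono (g := fun x₁ => C * q x₁) (hqint.const_mul C)
  · apply AEStronglyMeasurable.smul (f := fun x₁ => gaussDens d (a • x₁) b x * q x₁) (g := fun x₁ => x₁)
    · exact ((gauss_cont_x₁ a b x).aestronglyMeasurable.mul hqint.aestronglyMeasurable)
    · exact aestronglyMeasurable_id
  · apply Filter.Eventually.of_forall
    intro x₁
    rw [norm_smul, Real.norm_eq_abs, abs_of_nonneg (mul_nonneg (gaussDens_nonneg _ _ _) (hq0 x₁)),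
      Real.norm_eq_abs, abs_of_nonneg (mul_nonneg hCpos (hq0 x₁))]
    calc gaussDens d (a • x₁) b x * q x₁ * ‖x₁‖
        = (gaussDens d (a • x₁) b x * ‖x₁‖) * q x₁ := by ring
      _ ≤ C * q x₁ := mul_le_mul_of_nonneg_right (gauss_mul_norm_le ha hb x x₁) (hq0 x₁)

lemma weight_int_pos (hq0 : ∀ y, 0 ≤ q y) (hqint : Integrable q)
    (hqne : ¬ q =ᵐ[(volume : Measure (EuclideanSpace ℝ (Fin d)))] 0)
    (a : ℝ) {b : ℝ} (hb : b ≠ 0) (x : EuclideanSpace ℝ (Fin d)) :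
    0 < ∫ x₁, gaussDens d (a • x₁) b x * q x₁ := by
  rw [integral_pos_iff_support_of_nonneg
    (fun x₁ => mul_nonneg (gaussDens_nonneg _ _ _) (hq0 x₁)) (integrable_weight hqint a b x)]
  have hsupp : (Function.support fun x₁ => gaussDens d (a • x₁) b x * q x₁) =
      Function.support q := by
    ext x₁
    simp only [Function.mem_support, mul_ne_zero_iff]
    exact ⟨fun h => h.2, fun h => ⟨(gaussDens_pos hb _ _).ne', h⟩⟩
  rw [hsupp]
  by_contra h
  push_neg at h
  apply hqne
  rw [Filter.EventuallyEq, ae_iff]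
  simpa [Function.support] using le_antisymm h zero_le

lemma margVF_eq (hq0 : ∀ y, 0 ≤ q y) (hqint : Integrable q)
    (hqne : ¬ q =ᵐ[(volume : Measure (EuclideanSpace ℝ (Fin d)))] 0)
    {a b : ℝ} (ha : 0 < a) (hb : b ≠ 0) (a' b' : ℝ) (x : EuclideanSpace ℝ (Fin d)) :
    margVF d q a a' b b' x = (b' / b) • x + (a' - b' * a / b) • pmean d q a b x := by
  set N := ∫ x₁, gaussDens d (a • x₁) b x * q x₁ with hN
  have hNpos := weight_int_pos hq0 hqint hqne a hb x
  rw [margVF, pmean]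
  have hsplit : (∫ x₁, (gaussDens d (a • x₁) b x * q x₁) • condVF d a a' b b' x x₁) =
      N • ((b' / b) • x) + (a' - b' * a / b) •
        ∫ x₁, (gaussDens d (a • x₁) b x * q x₁) • x₁ := by
    have h1 : ∀ x₁ : EuclideanSpace ℝ (Fin d),
        (gaussDens d (a • x₁) b x * q x₁) • condVF d a a' b b' x x₁ =
        (gaussDens d (a • x₁) b x * q x₁) • ((b' / b) • x) +
          (a' - b' * a / b) • ((gaussDens d (a • x₁) b x * q x₁) • x₁) := by
      intro x₁
      rw [condVF, smul_add]
      congr 1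
      exact smul_comm _ _ _
    have hint1 : Integrable (fun x₁ =>
        (gaussDens d (a • x₁) b x * q x₁) • ((b' / b) • x)) :=
      (integrable_weight hqint a b x).smul_const _
    have hint2 : Integrable (fun x₁ =>
        (a' - b' * a / b) • ((gaussDens d (a • x₁) b x * q x₁) • x₁)) := by
      exact (integrable_weight_smul hq0 hqint ha hb x).smul (a' - b' * a / b)
    simp only [h1]
    rw [integral_add hint1 hint2, integral_smul_const, integral_smul]
  rw [hsplit, smul_add, smul_smul, inv_mul_cancel₀ hNpos.ne', one_smul]
  congr 1
  exact smul_comm _ _ _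

lemma margVF_degenerate (hqz : q =ᵐ[(volume : Measure (EuclideanSpace ℝ (Fin d)))] 0)
    (a a' b b' : ℝ) (x : EuclideanSpace ℝ (Fin d)) :
    margVF d q a a' b b' x = 0 := by
  rw [margVF]
  have h : (fun x₁ => (gaussDens d (a • x₁) b x * q x₁) • condVF d a a' b b' x x₁)
      =ᵐ[(volume : Measure (EuclideanSpace ℝ (Fin d)))] 0 := by
    filter_upwards [hqz] with x₁ h
    simp [h]
  rw [integral_congr_ae h]
  simp

lemma pmean_const_cancel {c : ℝ} (hc : c ≠ 0) (f : EuclideanSpace ℝ (Fin d) → ℝ) :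
    (∫ x₁, c * f x₁)⁻¹ • (∫ x₁, (c * f x₁) • x₁) =
      (∫ x₁, f x₁)⁻¹ • ∫ x₁, f x₁ • x₁ := by
  have h1 : (∫ x₁, c * f x₁) = c * ∫ x₁, f x₁ := integral_const_mul c f
  have h2 : (∫ x₁, (c * f x₁) • x₁) = c • ∫ x₁, f x₁ • x₁ := by
    rw [← integral_smul]
    congr 1
    funext x₁
    rw [mul_smul]
  rw [h1, h2, mul_inv, smul_smul]
  congr 1
  rw [mul_comm, ← mul_assoc, mul_inv_cancel₀ hc, one_mul]

lemma pmean_scale {s : ℝ} (hs : 0 < s) (a b : ℝ) (x : EuclideanSpace ℝ (Fin d)) :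
    pmean d q (s * a) (s * b) (s • x) = pmean d q a b x := by
  have h : ∀ x₁ : EuclideanSpace ℝ (Fin d),
      gaussDens d ((s * a) • x₁) (s * b) (s • x) =
        s ^ (-(d:ℝ)) * gaussDens d (a • x₁) b x := by
    intro x₁
    rw [mul_smul]
    exact gaussDens_scale d b hs (a • x₁) x
  rw [pmean, pmean]
  have h2 : ∀ x₁ : EuclideanSpace ℝ (Fin d),
      gaussDens d ((s * a) • x₁) (s * b) (s • x) * q x₁ =
        s ^ (-(d:ℝ)) * (gaussDens d (a • x₁) b x * q x₁) := by
    intro x₁; rw [h x₁]; ring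
  simp only [h2]
  exact pmean_const_cancel (by positivity) _

lemma pmean_snr {a b : ℝ} (hb : 0 < b) (x : EuclideanSpace ℝ (Fin d)) :
    pmean d q a b x = pmean d q (a / b) 1 (b⁻¹ • x) := by
  have := pmean_scale (q := q) hb (a / b) 1 (b⁻¹ • x)
  rw [mul_div_cancel₀ _ hb.ne', mul_one, smul_inv_smul₀ hb.ne'] at this
  exact this

lemma pmean_continuousAt (hq0 : ∀ y, 0 ≤ q y) (hqint : Integrable q)
    (hqne : ¬ q =ᵐ[(volume : Measure (EuclideanSpace ℝ (Fin d)))] 0)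
    {u₀ : ℝ} (hu₀ : 0 < u₀) (w₀ : EuclideanSpace ℝ (Fin d)) :
    ContinuousAt (fun p : ℝ × EuclideanSpace ℝ (Fin d) => pmean d q p.1 1 p.2) (u₀, w₀) := by
  have hUopen : IsOpen {p : ℝ × EuclideanSpace ℝ (Fin d) | u₀/2 < p.1 ∧ ‖p.2‖ < ‖w₀‖ + 1} := by
    apply IsOpen.and
    · exact isOpen_lt continuous_const continuous_fst
    · exact isOpen_lt (continuous_norm.comp continuous_snd) continuous_const
  have hUmem : {p : ℝ × EuclideanSpace ℝ (Fin d) | u₀/2 < p.1 ∧ ‖p.2‖ < ‖w₀‖ + 1} ∈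
      nhds (u₀, w₀) := hUopen.mem_nhds ⟨by simpa using half_lt_self hu₀, by simp⟩
  have hgc : ∀ x₁ : EuclideanSpace ℝ (Fin d), Continuous
      (fun p : ℝ × EuclideanSpace ℝ (Fin d) => gaussDens d (p.1 • x₁) 1 p.2) := by
    intro x₁
    unfold gaussDens
    fun_prop
  have hmeas : ∀ p : ℝ × EuclideanSpace ℝ (Fin d), AEStronglyMeasurable
      (fun x₁ => gaussDens d (p.1 • x₁) 1 p.2 * q x₁)
      (volume : Measure (EuclideanSpace ℝ (Fin d))) := by
    intro p
    exact (gauss_cont_x₁ p.1 1 p.2).aestronglyMeasurable.mul hqint.aestronglyMeasurable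
  have hden : ContinuousAt (fun p : ℝ × EuclideanSpace ℝ (Fin d) =>
      ∫ x₁, gaussDens d (p.1 • x₁) 1 p.2 * q x₁) (u₀, w₀) := by
    apply continuousAt_of_dominated (bound := fun x₁ => (2 * π * 1 ^ 2) ^ (-(d:ℝ)/2) * q x₁)
    · exact Filter.Eventually.of_forall hmeas
    · apply Filter.Eventually.of_forall
      intro p
      apply Filter.Eventually.of_forall
      intro x₁
      rw [Real.norm_eq_abs, abs_of_nonneg (mul_nonneg (gaussDens_nonneg _ _ _) (hq0 x₁))]
      exact mul_le_mul_of_nonneg_right (gaussDens_le _ _ _) (hq0 x₁)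
    · exact hqint.const_mul _
    · exact Filter.Eventually.of_forall fun x₁ =>
        ((hgc x₁).continuousAt).mul continuousAt_const
  have hnum : ContinuousAt (fun p : ℝ × EuclideanSpace ℝ (Fin d) =>
      ∫ x₁, (gaussDens d (p.1 • x₁) 1 p.2 * q x₁) • x₁) (u₀, w₀) := by
    set C := (2 * π * 1 ^ 2) ^ (-(d:ℝ)/2) * ((1 + 2 * 1 ^ 2 + (‖w₀‖ + 1)) / (u₀/2)) with hCdef
    apply continuousAt_of_dominated (bound := fun x₁ => C * q x₁)
    · exact Filter.Eventually.of_forall fun p =>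
        ((hmeas p).smul aestronglyMeasurable_id)
    · filter_upwards [hUmem] with p hp
      apply Filter.Eventually.of_forall
      intro x₁
      have hp1 : 0 < p.1 := lt_trans (by positivity) hp.1
      rw [norm_smul, Real.norm_eq_abs,
        abs_of_nonneg (mul_nonneg (gaussDens_nonneg _ _ _) (hq0 x₁))]
      calc gaussDens d (p.1 • x₁) 1 p.2 * q x₁ * ‖x₁‖
            = (gaussDens d (p.1 • x₁) 1 p.2 * ‖x₁‖) * q x₁ := by ring
          _ ≤ ((2 * π * 1 ^ 2) ^ (-(d:ℝ)/2) * ((1 + 2 * 1 ^ 2 + ‖p.2‖) / p.1)) * q x₁ := by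
              exact mul_le_mul_of_nonneg_right
                (gauss_mul_norm_le hp1 one_ne_zero p.2 x₁) (hq0 x₁)
          _ ≤ C * q x₁ := by
              apply mul_le_mul_of_nonneg_right _ (hq0 x₁)
              rw [hCdef]
              apply mul_le_mul_of_nonneg_left _ (by positivity)
              apply div_le_div₀ (by positivity) (by linarith [hp.2]) (by positivity) hp.1.le
    · exact hqint.const_mul _
    · apply Filter.Eventually.of_forall
      intro x₁
      exact (((hgc x₁).continuousAt).mul continuousAt_const).smul continuousAt_const
  have hdpos : 0 < ∫ x₁, gaussDens d (u₀ • x₁) 1 w₀ * q x₁ :=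
    weight_int_pos hq0 hqint hqne u₀ one_ne_zero w₀
  exact (hden.inv₀ hdpos.ne').smul hnum

/-- Key mean-value estimate: if `w' = ρ' • g` with `ρ' ≥ 0`, then increments of `w`
are `ε`-close to increments of `ρ` times `g τ₀`. -/
lemma transfer_est {E : Type*} [NormedAddCommGroup E] [NormedSpace ℝ E]
    {ρ ρ' : ℝ → ℝ} {w g : ℝ → E} {c₁ c₂ τ₀ : ℝ}
    (hτ₀ : τ₀ ∈ Ioo c₁ c₂)
    (hρ : ∀ τ ∈ Ioo c₁ c₂, HasDerivAt ρ (ρ' τ) τ)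
    (hρ0 : ∀ τ ∈ Ioo c₁ c₂, 0 ≤ ρ' τ)
    (hw : ∀ τ ∈ Ioo c₁ c₂, HasDerivAt w (ρ' τ • g τ) τ)
    (hgc : ContinuousAt g τ₀)
    {ε : ℝ} (hε : 0 < ε) :
    ∃ δ > 0, ∀ τ, |τ - τ₀| < δ →
      ‖w τ - w τ₀ - (ρ τ - ρ τ₀) • g τ₀‖ ≤ ε * |ρ τ - ρ τ₀| := by
  obtain ⟨δ₁, hδ₁pos, hδ₁⟩ := Metric.continuousAt_iff.mp hgc ε hε
  refine ⟨min δ₁ (min (τ₀ - c₁) (c₂ - τ₀)),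
    lt_min hδ₁pos (lt_min (by linarith [hτ₀.1]) (by linarith [hτ₀.2])), ?_⟩
  have key : ∀ a b : ℝ, a ≤ b → Icc a b ⊆ Ioo c₁ c₂ →
      (∀ τ ∈ Icc a b, ‖g τ - g τ₀‖ ≤ ε) →
      ‖w b - w a - (ρ b - ρ a) • g τ₀‖ ≤ ε * (ρ b - ρ a) := by
    intro a b hab hsub hgε
    set f : ℝ → E := fun τ => w τ - w a - (ρ τ - ρ a) • g τ₀ with hf
    set f' : ℝ → E := fun τ => ρ' τ • g τ - ρ' τ • g τ₀ with hf'
    set B : ℝ → ℝ := fun τ => ε * (ρ τ - ρ a) with hB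
    set B' : ℝ → ℝ := fun τ => ε * ρ' τ with hB'
    have hfd : ∀ τ ∈ Icc a b, HasDerivAt f (f' τ) τ := by
      intro τ hτ
      have h1 := hw τ (hsub hτ)
      have h2 := ((hρ τ (hsub hτ)).sub_const (ρ a)).smul_const (g τ₀)
      exact (h1.sub_const (w a)).sub h2
    have hBd : ∀ τ ∈ Icc a b, HasDerivAt B (B' τ) τ := by
      intro τ hτ
      simpa [hB, hB'] using ((hρ τ (hsub hτ)).sub_const (ρ a)).const_mul ε
    have := image_norm_le_of_norm_deriv_right_le_deriv_boundary'
      (f := f) (f' := f') (B := B) (B' := B') (a := a) (b := b)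
      (fun τ hτ => (hfd τ hτ).continuousAt.continuousWithinAt)
      (fun τ hτ => (hfd τ (Ico_subset_Icc_self hτ)).hasDerivWithinAt)
      (by simp [hf, hB])
      (fun τ hτ => (hBd τ hτ).continuousAt.continuousWithinAt)
      (fun τ hτ => (hBd τ (Ico_subset_Icc_self hτ)).hasDerivWithinAt)
      (fun τ hτ => by
        have h0 := hρ0 τ (hsub (Ico_subset_Icc_self hτ))
        have hg := hgε τ (Ico_subset_Icc_self hτ)
        have hcalc : ‖ρ' τ • g τ - ρ' τ • g τ₀‖ ≤ ε * ρ' τ := by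
          calc ‖ρ' τ • g τ - ρ' τ • g τ₀‖ = ρ' τ * ‖g τ - g τ₀‖ := by
                rw [← smul_sub, norm_smul, Real.norm_eq_abs, abs_of_nonneg h0]
            _ ≤ ρ' τ * ε := mul_le_mul_of_nonneg_left hg h0
            _ = ε * ρ' τ := by ring
        simpa only [hf', hB'] using hcalc)
    simpa [hf, hB] using this (right_mem_Icc.mpr hab)
  intro τ hτd
  rcases le_total τ₀ τ with h | h
  · have hsub : Icc τ₀ τ ⊆ Ioo c₁ c₂ := by
      intro y hy
      constructor
      · linarith [hy.1, hτ₀.1]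
      · have : τ - τ₀ < c₂ - τ₀ := lt_of_abs_lt (lt_of_lt_of_le hτd (by
          simp [min_le_right, le_trans (min_le_right _ _) (min_le_right _ _)])) |>.trans_le le_rfl
        linarith [hy.2]
    have hgε : ∀ y ∈ Icc τ₀ τ, ‖g y - g τ₀‖ ≤ ε := by
      intro y hy
      have : |y - τ₀| < δ₁ := by
        rw [abs_sub_lt_iff]
        constructor
        · have : τ - τ₀ < δ₁ := lt_of_abs_lt (lt_of_lt_of_le hτd (min_le_left _ _))
          linarith [hy.2]
        · linarith [hy.1, hδ₁pos]
      have := hδ₁ (by rwa [Real.dist_eq])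
      rw [dist_eq_norm] at this
      exact this.le
    have := key τ₀ τ h hsub hgε
    calc ‖w τ - w τ₀ - (ρ τ - ρ τ₀) • g τ₀‖ ≤ ε * (ρ τ - ρ τ₀) := this
      _ ≤ ε * |ρ τ - ρ τ₀| := mul_le_mul_of_nonneg_left (le_abs_self _) hε.le
  · have hsub : Icc τ τ₀ ⊆ Ioo c₁ c₂ := by
      intro y hy
      constructor
      · have : τ₀ - τ < τ₀ - c₁ := by
          have := lt_of_abs_lt (by rwa [abs_sub_comm] at hτd :
            |τ₀ - τ| < min δ₁ (min (τ₀ - c₁) (c₂ - τ₀)))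
          exact this.trans_le ((min_le_right _ _).trans (min_le_left _ _))
        linarith [hy.1]
      · linarith [hy.2, hτ₀.2]
    have hgε : ∀ y ∈ Icc τ τ₀, ‖g y - g τ₀‖ ≤ ε := by
      intro y hy
      have : |y - τ₀| < δ₁ := by
        rw [abs_sub_lt_iff]
        constructor
        · linarith [hy.2, hδ₁pos]
        · have : τ₀ - τ < δ₁ := by
            have := lt_of_abs_lt (by rwa [abs_sub_comm] at hτd :
              |τ₀ - τ| < min δ₁ (min (τ₀ - c₁) (c₂ - τ₀)))
            exact this.trans_le (min_le_left _ _)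
          linarith [hy.1]
      have := hδ₁ (by rwa [Real.dist_eq])
      rw [dist_eq_norm] at this
      exact this.le
    have := key τ τ₀ h hsub hgε
    have heq : ‖w τ - w τ₀ - (ρ τ - ρ τ₀) • g τ₀‖ =
        ‖w τ₀ - w τ - (ρ τ₀ - ρ τ) • g τ₀‖ := by
      rw [← norm_neg]
      congr 1
      rw [sub_smul, sub_smul]
      abel
    rw [heq]
    calc ‖w τ₀ - w τ - (ρ τ₀ - ρ τ) • g τ₀‖ ≤ ε * (ρ τ₀ - ρ τ) := this
      _ ≤ ε * |ρ τ - ρ τ₀| := by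
          rw [abs_sub_comm]
          exact mul_le_mul_of_nonneg_left (le_abs_self _) hε.le

/-- Continuity (ε-δ form) of the inverse of a strictly monotone function, on `[0,∞)`. -/
lemma inv_cont {ρ : ℝ → ℝ} (hmono : StrictMonoOn ρ (Ico (0:ℝ) 1)) (T : ℝ → ℝ)
    (hT : ∀ u, 0 ≤ u → T u ∈ Ico (0:ℝ) 1 ∧ ρ (T u) = u) {u₀ : ℝ} (hu₀ : 0 ≤ u₀) :
    ∀ ε > 0, ∃ δ > 0, ∀ u, 0 ≤ u → |u - u₀| < δ → |T u - T u₀| < ε := by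
  intro ε hε
  obtain ⟨hτ₀mem, hτ₀⟩ := hT u₀ hu₀
  obtain ⟨τ₀, hτ₀def⟩ : ∃ t, t = T u₀ := ⟨_, rfl⟩
  rw [← hτ₀def] at hτ₀mem hτ₀ ⊢
  obtain ⟨τp, hτp⟩ : ∃ t, t = min (τ₀ + ε / 2) ((τ₀ + 1) / 2) := ⟨_, rfl⟩
  have hτpmem : τp ∈ Ico (0:ℝ) 1 := by
    rw [hτp]
    constructor
    · apply le_min
      · linarith [hτ₀mem.1, hε]
      · linarith [hτ₀mem.1]
    · apply min_lt_of_right_lt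
      linarith [hτ₀mem.2]
  have hτpgt : τ₀ < τp := by rw [hτp]; exact lt_min (by linarith) (by linarith [hτ₀mem.2])
  have hτplt : τp < τ₀ + ε := by rw [hτp]; exact min_lt_of_left_lt (by linarith)
  have hup : u₀ < ρ τp := by
    rw [← hτ₀]
    exact hmono hτ₀mem hτpmem hτpgt
  have upper : ∀ u, 0 ≤ u → u < ρ τp → T u < τp := by
    intro u hu hlt
    by_contra hc
    push_neg at hc
    have := (hmono.monotoneOn) hτpmem (hT u hu).1 hc
    rw [(hT u hu).2] at this
    linarith
  rcases lt_or_ge τ₀ ε with hcase | hcase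
  · refine ⟨ρ τp - u₀, by linarith, fun u hu hud => ?_⟩
    rw [abs_sub_lt_iff]
    constructor
    · have : T u < τp := upper u hu (by obtain ⟨g1, g2⟩ := abs_sub_lt_iff.mp hud; linarith)
      linarith
    · linarith [(hT u hu).1.1]
  · obtain ⟨τm, hτm⟩ : ∃ t, t = τ₀ - ε / 2 := ⟨_, rfl⟩
    have hτmmem : τm ∈ Ico (0:ℝ) 1 := ⟨by rw [hτm]; linarith, by rw [hτm]; linarith [hτ₀mem.2]⟩
    have hlo : ρ τm < u₀ := by
      rw [← hτ₀]
      exact hmono hτmmem hτ₀mem (by rw [hτm]; linarith)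
    refine ⟨min (ρ τp - u₀) (u₀ - ρ τm), lt_min (by linarith) (by linarith), fun u hu hud => ?_⟩
    obtain ⟨h1, h2⟩ := abs_sub_lt_iff.mp hud
    have hd1 : u - u₀ < ρ τp - u₀ := lt_of_lt_of_le h1 (min_le_left _ _)
    have hd2 : u₀ - u < u₀ - ρ τm := lt_of_lt_of_le h2 (min_le_right _ _)
    rw [abs_sub_lt_iff]
    constructor
    · have : T u < τp := upper u hu (by linarith)
      linarith
    · have : τm < T u := by
        by_contra hc
        push_neg at hc
        have := (hmono.monotoneOn) (hT u hu).1 hτmmem hc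
        rw [(hT u hu).2] at this
        linarith
      rw [hτm] at this
      linarith

/-- Derivative of a strictly monotone function is nonnegative. -/
lemma deriv_nonneg_of_strictMonoOn {ρ : ℝ → ℝ} {ρ'τ : ℝ}
    (hmono : StrictMonoOn ρ (Ico (0:ℝ) 1)) {τ : ℝ} (hτ : τ ∈ Ioo (0:ℝ) 1)
    (h : HasDerivAt ρ ρ'τ τ) : 0 ≤ ρ'τ := by
  have hslope := hasDerivAt_iff_tendsto_slope.mp h
  apply ge_of_tendsto hslope
  have hmem : Ioo (0:ℝ) 1 ∈ nhdsWithin τ {τ}ᶜ :=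
    nhdsWithin_le_nhds (isOpen_Ioo.mem_nhds hτ)
  filter_upwards [hmem, self_mem_nhdsWithin] with y hy hne
  have hyne : y ≠ τ := hne
  rcases lt_or_gt_of_ne hyne with hlt | hgt
  · rw [slope_def_field]
    rw [show (ρ y - ρ τ) / (y - τ) = (ρ τ - ρ y) / (τ - y) by
      rw [← neg_div_neg_eq]; ring_nf]
    apply div_nonneg
    · have := hmono (Ioo_subset_Ico_self hy) (Ioo_subset_Ico_self hτ) hlt
      linarith
    · linarith
  · rw [slope_def_field]
    apply div_nonneg
    · have := hmono (Ioo_subset_Ico_self hτ) (Ioo_subset_Ico_self hy) hgt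
      linarith
    · linarith

attribute [irreducible] pmean margVF gaussDens

set_option maxHeartbeats 1000000 in
/-- The reparametrized flow `u ↦ x(T u)/σ(T u)` solves `W' = pmean (W u) u`. -/
lemma W_hasDerivAt {d : ℕ} {q : EuclideanSpace ℝ (Fin d) → ℝ} (hq0 : ∀ y, 0 ≤ q y)
    (hqint : Integrable q)
    (hqne : ¬ q =ᵐ[(volume : Measure (EuclideanSpace ℝ (Fin d)))] 0)
    {α σ α' σ' : ℝ → ℝ}
    (hσpos : ∀ τ ∈ Ico (0:ℝ) 1, 0 < σ τ)
    (hsnr : StrictMonoOn (fun τ => α τ / σ τ) (Ico (0:ℝ) 1))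
    (hα0 : α 0 = 0)
    (hα : ∀ τ ∈ Ioo (0:ℝ) 1, HasDerivAt α (α' τ) τ)
    (hσ : ∀ τ ∈ Ioo (0:ℝ) 1, HasDerivAt σ (σ' τ) τ)
    {x : ℝ → EuclideanSpace ℝ (Fin d)}
    (hx : ∀ τ ∈ Ioo (0:ℝ) 1,
      HasDerivAt x (margVF d q (α τ) (α' τ) (σ τ) (σ' τ) (x τ)) τ)
    (T : ℝ → ℝ) (hT : ∀ u, 0 ≤ u → T u ∈ Ico (0:ℝ) 1 ∧ α (T u) / σ (T u) = u)
    {u₀ : ℝ} (hu₀ : 0 < u₀) :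
    HasDerivAt (fun u => (σ (T u))⁻¹ • x (T u))
      (pmean d q u₀ 1 ((σ (T u₀))⁻¹ • x (T u₀))) u₀ := by
  set ρ : ℝ → ℝ := fun τ => α τ / σ τ with hρdef
  set ρ' : ℝ → ℝ := fun τ => (α' τ * σ τ - α τ * σ' τ) / (σ τ) ^ 2 with hρ'def
  set w : ℝ → EuclideanSpace ℝ (Fin d) := fun τ => (σ τ)⁻¹ • x τ with hwdef
  set g : ℝ → EuclideanSpace ℝ (Fin d) := fun τ => pmean d q (ρ τ) 1 (w τ) with hgdef
  have hIooIco : Ioo (0:ℝ) 1 ⊆ Ico 0 1 := Ioo_subset_Ico_self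
  have hρ0 : ρ 0 = 0 := by rw [hρdef]; simp [hα0]
  have hρpos : ∀ τ ∈ Ioo (0:ℝ) 1, 0 < ρ τ := by
    intro τ hτ
    rw [← hρ0]
    exact hsnr (left_mem_Ico.mpr one_pos) (hIooIco hτ) hτ.1
  have hαpos : ∀ τ ∈ Ioo (0:ℝ) 1, 0 < α τ := by
    intro τ hτ
    have h1 := hρpos τ hτ
    have h2 := hσpos τ (hIooIco hτ)
    have : α τ = ρ τ * σ τ := by
      rw [hρdef]
      field_simp
    rw [this]
    positivity
  have hρd : ∀ τ ∈ Ioo (0:ℝ) 1, HasDerivAt ρ (ρ' τ) τ := by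
    intro τ hτ
    exact (hα τ hτ).div (hσ τ hτ) (hσpos τ (hIooIco hτ)).ne'
  have hρ'0 : ∀ τ ∈ Ioo (0:ℝ) 1, 0 ≤ ρ' τ := fun τ hτ =>
    deriv_nonneg_of_strictMonoOn hsnr hτ (hρd τ hτ)
  have hw : ∀ τ ∈ Ioo (0:ℝ) 1, HasDerivAt w (ρ' τ • g τ) τ := by
    intro τ hτ
    have hσne := (hσpos τ (hIooIco hτ)).ne'
    have h1 : HasDerivAt (fun τ => (σ τ)⁻¹) (-(σ' τ) / (σ τ) ^ 2) τ := (hσ τ hτ).inv hσne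
    have h2 := h1.smul (hx τ hτ)
    have h3 : margVF d q (α τ) (α' τ) (σ τ) (σ' τ) (x τ) =
        (σ' τ / σ τ) • x τ + (α' τ - σ' τ * α τ / σ τ) • g τ := by
      rw [margVF_eq hq0 hqint hqne (hαpos τ hτ) hσne, pmean_snr (hσpos τ (hIooIco hτ)), hgdef]
    rw [h3] at h2
    refine h2.congr_deriv ?_
    symm
    match_scalars
    · simp only [hρ'def]
      field_simp
    · field_simp
      ring
  -- main part: derivative of W at u₀ via the transfer estimate
  have hτ₀mem : T u₀ ∈ Ico (0:ℝ) 1 := (hT u₀ hu₀.le).1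
  have hρτ₀ : ρ (T u₀) = u₀ := (hT u₀ hu₀.le).2
  have hτ₀pos : 0 < T u₀ := by
    rcases eq_or_lt_of_le hτ₀mem.1 with h | h
    · exfalso
      have : u₀ = 0 := by rw [← hρτ₀, ← h, hρ0]
      linarith
    · exact h
  have hτ₀Ioo : T u₀ ∈ Ioo (0:ℝ) 1 := ⟨hτ₀pos, hτ₀mem.2⟩
  have hgc : ContinuousAt g (T u₀) := by
    have hwc : ContinuousAt w (T u₀) := (hw _ hτ₀Ioo).continuousAt
    have hρc : ContinuousAt ρ (T u₀) := (hρd _ hτ₀Ioo).continuousAt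
    have hpair : ContinuousAt (fun τ => ((ρ τ : ℝ), w τ)) (T u₀) := hρc.prodMk hwc
    have hP := pmean_continuousAt hq0 hqint hqne
      (by rw [hρτ₀]; exact hu₀ : 0 < ρ (T u₀)) (w (T u₀))
    exact Filter.Tendsto.comp hP hpair
  rw [hasDerivAt_iff_isLittleO]
  rw [Asymptotics.isLittleO_iff]
  intro c hc
  obtain ⟨δ₁, hδ₁pos, hδ₁⟩ := transfer_est hτ₀Ioo hρd hρ'0 hw hgc hc
  obtain ⟨δ₂, hδ₂pos, hδ₂⟩ := inv_cont hsnr T hT hu₀.le δ₁ hδ₁pos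
  have hball : Metric.ball u₀ (min δ₂ u₀) ∈ nhds u₀ :=
    Metric.ball_mem_nhds _ (lt_min hδ₂pos hu₀)
  filter_upwards [hball] with u hu
  rw [Metric.mem_ball, Real.dist_eq] at hu
  have hu0 : 0 < u := by
    have := abs_sub_lt_iff.mp (lt_of_lt_of_le hu (min_le_right _ _))
    linarith [this.2]
  have hTu : |T u - T u₀| < δ₁ := hδ₂ u hu0.le (lt_of_lt_of_le hu (min_le_left _ _))
  have hest := hδ₁ (T u) hTu
  have hρu : ρ (T u) = u := (hT u hu0.le).2
  rw [hρu, hρτ₀] at hest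
  calc ‖(σ (T u))⁻¹ • x (T u) - (σ (T u₀))⁻¹ • x (T u₀) -
        (u - u₀) • pmean d q u₀ 1 ((σ (T u₀))⁻¹ • x (T u₀))‖
      = ‖w (T u) - w (T u₀) - (u - u₀) • g (T u₀)‖ := by
        simp only [hwdef, hgdef, hρτ₀]
    _ ≤ c * |u - u₀| := hest
    _ = c * ‖u - u₀‖ := by rw [Real.norm_eq_abs]

set_option maxHeartbeats 1000000 in
/-- All Gaussian-path schedulers induce the same noise-to-data coupling. -/
theorem gaussian_paths_same_coupling (d : ℕ)
    (q : EuclideanSpace ℝ (Fin d) → ℝ) (hq0 : ∀ y, 0 ≤ q y) (hqint : Integrable q)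
    (α σ α' σ' αb σb αb' σb' : ℝ → ℝ)
    -- scheduler (α, σ)
    (hαc : ContinuousOn α (Icc 0 1)) (hσc : ContinuousOn σ (Icc 0 1))
    (hα0 : α 0 = 0) (hσ1 : σ 1 = 0) (hα1 : α 1 = 1) (hσ0 : σ 0 = 1)
    (hσpos : ∀ τ ∈ Ico (0:ℝ) 1, 0 < σ τ)
    (hsnr : StrictMonoOn (fun τ => α τ / σ τ) (Ico (0:ℝ) 1))
    (hsurj : ∀ y : ℝ, 0 ≤ y → ∃ τ ∈ Ico (0:ℝ) 1, α τ / σ τ = y)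
    (hα : ∀ τ ∈ Ioo (0:ℝ) 1, HasDerivAt α (α' τ) τ)
    (hσ : ∀ τ ∈ Ioo (0:ℝ) 1, HasDerivAt σ (σ' τ) τ)
    -- scheduler (ᾱ, σ̄)
    (hαbc : ContinuousOn αb (Icc 0 1)) (hσbc : ContinuousOn σb (Icc 0 1))
    (hαb0 : αb 0 = 0) (hσb1 : σb 1 = 0) (hαb1 : αb 1 = 1) (hσb0 : σb 0 = 1)
    (hσbpos : ∀ r ∈ Ico (0:ℝ) 1, 0 < σb r)
    (hsnrb : StrictMonoOn (fun r => αb r / σb r) (Ico (0:ℝ) 1))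
    (hαb : ∀ r ∈ Ioo (0:ℝ) 1, HasDerivAt αb (αb' r) r)
    (hσb : ∀ r ∈ Ioo (0:ℝ) 1, HasDerivAt σb (σb' r) r)
    -- the two flows, started from the same noise point x₀
    (x xb : ℝ → EuclideanSpace ℝ (Fin d)) (x₀ : EuclideanSpace ℝ (Fin d))
    (hxc : ContinuousOn x (Icc 0 1)) (hxbc : ContinuousOn xb (Icc 0 1))
    (hx : ∀ τ ∈ Ioo (0:ℝ) 1,
      HasDerivAt x (margVF d q (α τ) (α' τ) (σ τ) (σ' τ) (x τ)) τ)
    (hxb : ∀ r ∈ Ioo (0:ℝ) 1,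
      HasDerivAt xb (margVF d q (αb r) (αb' r) (σb r) (σb' r) (xb r)) r)
    (hx0 : x 0 = x₀) (hxb0 : xb 0 = x₀)
    -- uniqueness of solutions of the (ᾱ, σ̄) flow
    (huniq : ∀ y z : ℝ → EuclideanSpace ℝ (Fin d),
      ContinuousOn y (Icc 0 1) → ContinuousOn z (Icc 0 1) →
      (∀ r ∈ Ioo (0:ℝ) 1,
        HasDerivAt y (margVF d q (αb r) (αb' r) (σb r) (σb' r) (y r)) r) →
      (∀ r ∈ Ioo (0:ℝ) 1,
        HasDerivAt z (margVF d q (αb r) (αb' r) (σb r) (σb' r) (z r)) r) →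
      y 0 = z 0 → y 1 = z 1) :
    xb 1 = x 1 := by
  by_cases hdeg : q =ᵐ[(volume : Measure (EuclideanSpace ℝ (Fin d)))] 0
  · -- degenerate case: both velocity fields vanish, so x itself solves the barred ODE
    apply huniq xb x hxbc hxc hxb _ (by rw [hx0, hxb0])
    intro r hr
    have h1 := hx r hr
    rw [margVF_degenerate hdeg] at h1 ⊢
    exact h1
  · -- nondegenerate case: scale-time transformed flow
    -- the inverse time map
    set T : ℝ → ℝ := fun u => if h : 0 ≤ u then (hsurj u h).choose else 0 with hTdef
    have hT : ∀ u, 0 ≤ u → T u ∈ Ico (0:ℝ) 1 ∧ α (T u) / σ (T u) = u := by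
      intro u hu
      have : T u = (hsurj u hu).choose := by rw [hTdef]; simp [hu]
      rw [this]
      exact (hsurj u hu).choose_spec
    have hρ00 : α 0 / σ 0 = 0 := by rw [hα0, hσ0]; simp
    have hT0 : T 0 = 0 := by
      apply hsnr.injOn (hT 0 le_rfl).1 (left_mem_Ico.mpr one_pos)
      show α (T 0) / σ (T 0) = α 0 / σ 0
      rw [(hT 0 le_rfl).2, hρ00]
    -- barred snr
    set ρb : ℝ → ℝ := fun r => αb r / σb r with hρbdef
    have hρb0 : ρb 0 = 0 := by rw [hρbdef]; simp [hαb0]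
    have hρbnonneg : ∀ r ∈ Ico (0:ℝ) 1, 0 ≤ ρb r := by
      intro r hr
      rw [← hρb0]
      exact hsnrb.monotoneOn (left_mem_Ico.mpr one_pos) hr hr.1
    have hρbpos : ∀ r ∈ Ioo (0:ℝ) 1, 0 < ρb r := by
      intro r hr
      rw [← hρb0]
      exact hsnrb (left_mem_Ico.mpr one_pos) (Ioo_subset_Ico_self hr) hr.1
    have hαbpos : ∀ r ∈ Ioo (0:ℝ) 1, 0 < αb r := by
      intro r hr
      have h1 := hρbpos r hr
      have h2 := hσbpos r (Ioo_subset_Ico_self hr)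
      have h3 : αb r = ρb r * σb r := by rw [hρbdef]; field_simp
      rw [h3]; positivity
    have hρbd : ∀ r ∈ Ioo (0:ℝ) 1, HasDerivAt ρb
        ((αb' r * σb r - αb r * σb' r) / (σb r) ^ 2) r := by
      intro r hr
      exact (hαb r hr).div (hσb r hr) (hσbpos r (Ioo_subset_Ico_self hr)).ne'
    -- the candidate solution
    set W : ℝ → EuclideanSpace ℝ (Fin d) := fun u => (σ (T u))⁻¹ • x (T u) with hWdef
    set z : ℝ → EuclideanSpace ℝ (Fin d) :=
      fun r => if r = 1 then x 1 else σb r • W (ρb r) with hzdef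
    have hz1 : z 1 = x 1 := by rw [hzdef]; simp
    have hz0 : z 0 = x₀ := by
      rw [hzdef]
      simp only [if_neg one_ne_zero.symm]
      rw [hρb0, hσb0, hWdef]
      simp only [hT0, hσ0, hx0]
      norm_num
    -- differentiability of z on (0,1)
    have hzderiv : ∀ r ∈ Ioo (0:ℝ) 1,
        HasDerivAt z (margVF d q (αb r) (αb' r) (σb r) (σb' r) (z r)) r := by
      intro r hr
      have hrI := Ioo_subset_Ico_self hr
      have hσbne := (hσbpos r hrI).ne'
      have hu₀ := hρbpos r hr
      have hWd := W_hasDerivAt hq0 hqint hdeg hσpos hsnr hα0 hα hσ hx T hT hu₀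
      have hcomp : HasDerivAt (fun r' => W (ρb r'))
          (((αb' r * σb r - αb r * σb' r) / (σb r) ^ 2) • pmean d q (ρb r) 1 (W (ρb r))) r :=
        HasDerivAt.scomp r hWd (hρbd r hr)
      have hmain := (hσb r hr).smul hcomp
      have hzr : z r = σb r • W (ρb r) := by
        rw [hzdef]
        simp [ne_of_lt hr.2]
      have hkey : HasDerivAt (fun r' => σb r' • W (ρb r'))
          (margVF d q (αb r) (αb' r) (σb r) (σb' r) (z r)) r := by
        refine hmain.congr_deriv ?_
        symm
        rw [hzr, margVF_eq hq0 hqint hdeg (hαbpos r hr) hσbne,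
          pmean_snr (hσbpos r hrI), inv_smul_smul₀ hσbne]
        simp only [hρbdef]
        match_scalars
        · field_simp
        · field_simp
      have hzeq : z =ᶠ[nhds r] fun r' => σb r' • W (ρb r') := by
        filter_upwards [isOpen_Ioo.mem_nhds hr] with r' hr'
        rw [hzdef]
        simp [ne_of_lt hr'.2]
      exact hkey.congr_of_eventuallyEq hzeq
    -- continuity of z on [0,1]
    -- continuity pieces
    have hρbcOn : ContinuousOn ρb (Ico 0 1) := by
      rw [hρbdef]
      exact ContinuousOn.div (hαbc.mono Ico_subset_Icc_self) (hσbc.mono Ico_subset_Icc_self)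
        (fun r hr => (hσbpos r hr).ne')
    have hTW : ∀ r₀ ∈ Ico (0:ℝ) 1, ContinuousWithinAt (fun r => T (ρb r)) (Ico (0:ℝ) 1) r₀ := by
      intro r₀ hr₀
      rw [Metric.continuousWithinAt_iff]
      intro ε hε
      obtain ⟨δ₁, hδ₁pos, hδ₁⟩ := inv_cont hsnr T hT (hρbnonneg r₀ hr₀) ε hε
      obtain ⟨δ, hδpos, hδ⟩ := Metric.continuousWithinAt_iff.mp (hρbcOn r₀ hr₀) δ₁ hδ₁pos
      refine ⟨δ, hδpos, fun r hr hrd => ?_⟩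
      have h1 := hδ hr hrd
      rw [Real.dist_eq] at h1
      rw [Real.dist_eq]
      exact hδ₁ (ρb r) (hρbnonneg r hr) h1
    have hmapsTo : MapsTo (fun r => T (ρb r)) (Ico (0:ℝ) 1) (Icc (0:ℝ) 1) := by
      intro r hr
      exact Ico_subset_Icc_self (hT (ρb r) (hρbnonneg r hr)).1
    have hTWOn : ContinuousOn (fun r => T (ρb r)) (Ico (0:ℝ) 1) := fun r hr => hTW r hr
    have hσTW : ContinuousOn (fun r => σ (T (ρb r))) (Ico (0:ℝ) 1) :=
      hσc.comp hTWOn hmapsTo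
    have hxTW : ContinuousOn (fun r => x (T (ρb r))) (Ico (0:ℝ) 1) :=
      hxc.comp hTWOn hmapsTo
    have hσTWne : ∀ r ∈ Ico (0:ℝ) 1, σ (T (ρb r)) ≠ 0 :=
      fun r hr => (hσpos _ (hT (ρb r) (hρbnonneg r hr)).1).ne'
    have hFc : ContinuousOn (fun r => σb r • W (ρb r)) (Ico (0:ℝ) 1) := by
      rw [hWdef]
      exact (hσbc.mono Ico_subset_Icc_self).smul ((hσTW.inv₀ hσTWne).smul hxTW)
    have hzF : ∀ r ∈ Ico (0:ℝ) 1, z r = σb r • W (ρb r) := by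
      intro r hr
      rw [hzdef]
      simp [ne_of_lt hr.2]
    have hIcoMem : ∀ r₀ ∈ Ico (0:ℝ) 1, Ico (0:ℝ) 1 ∈ nhdsWithin r₀ (Icc (0:ℝ) 1) := by
      intro r₀ hr₀
      apply Filter.mem_of_superset (inter_mem_nhdsWithin _ (Iio_mem_nhds hr₀.2))
      intro y hy
      exact ⟨hy.1.1, hy.2⟩
    -- the limit of z at 1
    have hz1lim : Filter.Tendsto z (nhdsWithin 1 (Ico (0:ℝ) 1)) (nhds (x 1)) := by
      set l := nhdsWithin (1:ℝ) (Ico (0:ℝ) 1) with hldef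
      have hmem1 : (1:ℝ) ∈ Icc (0:ℝ) 1 := right_mem_Icc.mpr zero_le_one
      have hIcoIcc : nhdsWithin (1:ℝ) (Ico (0:ℝ) 1) ≤ nhdsWithin 1 (Icc (0:ℝ) 1) :=
        nhdsWithin_mono 1 Ico_subset_Icc_self
      have hσbl : Filter.Tendsto σb l (nhdsWithin 0 (Ioi (0:ℝ))) := by
        rw [tendsto_nhdsWithin_iff]
        constructor
        · have := (hσbc 1 hmem1).tendsto.mono_left hIcoIcc
          rwa [hσb1] at this
        · filter_upwards [eventually_mem_nhdsWithin] with r hr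
          exact hσbpos r hr
      have hαbl : Filter.Tendsto αb l (nhds 1) := by
        have := (hαbc 1 hmem1).tendsto.mono_left hIcoIcc
        rwa [hαb1] at this
      have hρbtop : Filter.Tendsto ρb l Filter.atTop := by
        have h1 : Filter.Tendsto (fun r => (σb r)⁻¹) l Filter.atTop :=
          tendsto_inv_nhdsGT_zero.comp hσbl
        have h2 := Filter.Tendsto.pos_mul_atTop one_pos hαbl h1
        apply h2.congr
        intro r
        simp only [hρbdef]
        rw [div_eq_mul_inv]
      have hτIco : ∀ᶠ r in l, T (ρb r) ∈ Ico (0:ℝ) 1 := by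
        filter_upwards [eventually_mem_nhdsWithin] with r hr
        exact (hT (ρb r) (hρbnonneg r hr)).1
      have hτ : Filter.Tendsto (fun r => T (ρb r)) l (nhds 1) := by
        rw [tendsto_order]
        constructor
        · intro τ' hτ'
          rcases lt_or_ge τ' 0 with hneg | hpos
          · filter_upwards [hτIco] with r hr
            exact lt_of_lt_of_le hneg hr.1
          · have hτ'mem : τ' ∈ Ico (0:ℝ) 1 := ⟨hpos, hτ'⟩
            filter_upwards [hρbtop.eventually_gt_atTop (α τ' / σ τ'), hτIco,
              eventually_mem_nhdsWithin] with r hgt hrτ hr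
            by_contra hc
            push_neg at hc
            have := hsnr.monotoneOn hrτ hτ'mem hc
            have h2 := (hT (ρb r) (hρbnonneg r hr)).2
            rw [h2] at this
            linarith
        · intro c hc
          filter_upwards [hτIco] with r hr
          exact lt_trans hr.2 hc
      have hτIcc : Filter.Tendsto (fun r => T (ρb r)) l (nhdsWithin 1 (Icc (0:ℝ) 1)) := by
        rw [tendsto_nhdsWithin_iff]
        exact ⟨hτ, hτIco.mono fun r hr => Ico_subset_Icc_self hr⟩
      have hαloc : Filter.Tendsto (fun r => α (T (ρb r))) l (nhds 1) := by
        have := (hαc 1 hmem1).tendsto.comp hτIcc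
        rwa [hα1] at this
      have hxlim : Filter.Tendsto (fun r => x (T (ρb r))) l (nhds (x 1)) :=
        (hxc 1 hmem1).tendsto.comp hτIcc
      have hsc : Filter.Tendsto (fun r => σb r * (σ (T (ρb r)))⁻¹) l (nhds 1) := by
        have hdiv : Filter.Tendsto (fun r => αb r / α (T (ρb r))) l (nhds 1) := by
          have := hαbl.div hαloc one_ne_zero
          rwa [div_one] at this
        apply hdiv.congr'
        have hIoi : ∀ᶠ r in l, (0:ℝ) < r := by
          apply Filter.eventually_of_mem (nhdsWithin_le_nhds (Ioi_mem_nhds one_pos))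
          exact fun r hr => hr
        filter_upwards [hIoi, eventually_mem_nhdsWithin] with r hr0 hrIco
        have hrIoo : r ∈ Ioo (0:ℝ) 1 := ⟨hr0, hrIco.2⟩
        have hρbr : 0 < ρb r := hρbpos r hrIoo
        have hτmem := (hT (ρb r) (hρbnonneg r hrIco)).1
        have hρτ := (hT (ρb r) (hρbnonneg r hrIco)).2
        have hστ := hσpos _ hτmem
        have hατ : 0 < α (T (ρb r)) := by
          have : α (T (ρb r)) = (α (T (ρb r)) / σ (T (ρb r))) * σ (T (ρb r)) := by
            field_simp
          rw [this, hρτ]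
          positivity
        have hσbr := hσbpos r hrIco
        have hcross : α (T (ρb r)) * σb r = αb r * σ (T (ρb r)) := by
          have hρτ' : α (T (ρb r)) / σ (T (ρb r)) = αb r / σb r := hρτ
          rw [div_eq_div_iff hστ.ne' hσbr.ne'] at hρτ'
          linarith [hρτ']
        rw [div_eq_iff hατ.ne', show σb r * (σ (T (ρb r)))⁻¹ * α (T (ρb r)) =
          (α (T (ρb r)) * σb r) * (σ (T (ρb r)))⁻¹ by ring, hcross,
          mul_inv_cancel_right₀ hστ.ne']
      have hzFlim : Filter.Tendsto (fun r => σb r • W (ρb r)) l (nhds (x 1)) := by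
        have h1 : Filter.Tendsto (fun r => (σb r * (σ (T (ρb r)))⁻¹) • x (T (ρb r))) l
            (nhds ((1:ℝ) • x 1)) := hsc.smul hxlim
        rw [one_smul] at h1
        apply h1.congr
        intro r
        rw [hWdef, smul_smul]
      apply hzFlim.congr'
      filter_upwards [eventually_mem_nhdsWithin] with r hr
      exact (hzF r hr).symm
    have hzc : ContinuousOn z (Icc 0 1) := by
      intro r₀ hr₀
      rcases eq_or_lt_of_le hr₀.2 with h1 | h1
      · -- r₀ = 1
        have : r₀ = 1 := h1
        subst this
        rw [← Ico_insert_right (zero_le_one), continuousWithinAt_insert_self]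
        have : z 1 = x 1 := hz1
        unfold ContinuousWithinAt
        rw [this]
        exact hz1lim
      · -- r₀ < 1
        have hr₀Ico : r₀ ∈ Ico (0:ℝ) 1 := ⟨hr₀.1, h1⟩
        have h2 : ContinuousWithinAt z (Ico (0:ℝ) 1) r₀ :=
          (hFc r₀ hr₀Ico).congr hzF (hzF r₀ hr₀Ico)
        exact h2.mono_of_mem_nhdsWithin (hIcoMem r₀ hr₀Ico)
    have := huniq xb z hxbc hzc hxb hzderiv (by rw [hz0, hxb0])
    rw [this, hz1]
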